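/- arXiv:1306.3427 — 2 statements merged into one kernel-verified Lean document; each statement's English description precedes it below -/
import Mathlib

section
/- One has ∫₀^t ( c₂·g₂(z) + c₂·∫₀^z g₂(u) W′(z−u) du − C(z)·C(t)/(b·U(t)) ) dz = C(t)/(b·U(t)). (This computes the probability p that at least one individual is sampled before time t by integrating the density of the first sampling time S₁.) -/
open Real Set intervalIntegral

open MeasureTheory

lemma triangle_swap (t : ℝ) (ht : 0 ≤ t) (g w : ℝ → ℝ) (hg : Continuous g) (hw : Continuous w) :
    (∫ u in (0:ℝ)..t, g u * (∫ z in u..t, w (z - u))) =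
    ∫ z in (0:ℝ)..t, ∫ u in (0:ℝ)..z, g u * w (z - u) := by
  set μ := (volume : Measure ℝ).restrict (Ioc 0 t) with hμ
  have hfin : IsFiniteMeasure μ := by
    constructor; rw [hμ, Measure.restrict_apply_univ]; exact measure_Ioc_lt_top
  set f : ℝ → ℝ → ℝ := fun z u => if u < z then g u * w (z - u) else 0 with hf
  -- continuity of the unrestricted function
  have hφ : Continuous fun p : ℝ × ℝ => g p.2 * w (p.1 - p.2) := by fun_prop
  -- bound
  obtain ⟨M, hM⟩ : ∃ M, ∀ p ∈ Icc (0:ℝ) t ×ˢ Icc (0:ℝ) t, ‖g p.2 * w (p.1 - p.2)‖ ≤ M :=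
    (isCompact_Icc.prod isCompact_Icc).exists_bound_of_continuousOn hφ.continuousOn
  have hM0 : 0 ≤ M := le_trans (norm_nonneg _) (hM (0, 0) ⟨⟨le_rfl, ht⟩, ⟨le_rfl, ht⟩⟩)
  -- strong measurability
  have hsm : StronglyMeasurable (Function.uncurry f) := by
    have : Function.uncurry f = {p : ℝ × ℝ | p.2 < p.1}.indicator
        (fun p => g p.2 * w (p.1 - p.2)) := by
      ext p; by_cases h : p.2 < p.1 <;> simp [Function.uncurry, hf, h, indicator]
    rw [this]
    exact hφ.stronglyMeasurable.indicator (measurableSet_lt measurable_snd measurable_fst)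
  -- integrability on the product
  have hint : Integrable (Function.uncurry f) (μ.prod μ) := by
    refine Integrable.mono' (integrable_const M) hsm.aestronglyMeasurable ?_
    rw [hμ, Measure.prod_restrict]
    refine (ae_restrict_iff' (measurableSet_Ioc.prod measurableSet_Ioc)).2 (ae_of_all _ ?_)
    rintro ⟨z, u⟩ ⟨hz, hu⟩
    by_cases h : u < z
    · have := hM (z, u) ⟨⟨hz.1.le, hz.2⟩, ⟨hu.1.le, hu.2⟩⟩
      simp only [Function.uncurry, hf, if_pos h]
      exact this
    · simp [Function.uncurry, hf, h, hM0]
  have hswap := integral_integral_swap hint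
  -- identify left side
  have hL : (∫ u, ∫ z, f z u ∂μ ∂μ) = ∫ u in (0:ℝ)..t, g u * (∫ z in u..t, w (z - u)) := by
    rw [intervalIntegral.integral_of_le ht, hμ]
    refine setIntegral_congr_fun measurableSet_Ioc fun u hu => ?_
    have h1 : Ioc (0:ℝ) u ∪ Ioc u t = Ioc 0 t := Ioc_union_Ioc_eq_Ioc hu.1.le hu.2
    have hi : ∀ s : Set ℝ, s ⊆ Ioc 0 t → IntegrableOn (fun z => f z u) s := by
      intro s hs
      have hsm2 : StronglyMeasurable fun z => f z u := by
        have : (fun z => f z u) = (Ioi u).indicator (fun z => g u * w (z - u)) := by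
          ext z; by_cases h : u < z <;> simp [hf, h, indicator, mem_Ioi]
        rw [this]
        exact (by fun_prop : Continuous fun z : ℝ => g u * w (z - u)).stronglyMeasurable.indicator
          measurableSet_Ioi
      refine (IntegrableOn.mono_set ?_ hs)
      refine Integrable.mono' (integrable_const M) hsm2.aestronglyMeasurable ?_
      refine (ae_restrict_iff' measurableSet_Ioc).2 (ae_of_all _ fun z hz => ?_)
      by_cases h : u < z
      · have := hM (z, u) ⟨⟨hz.1.le, hz.2⟩, ⟨hu.1.le, hu.2⟩⟩
        simp only [hf, if_pos h]
        exact this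
      · simp [hf, h, hM0]
    calc ∫ z, f z u ∂μ = (∫ z in Ioc 0 u, f z u) + ∫ z in Ioc u t, f z u := by
          rw [hμ, ← h1, setIntegral_union (Ioc_disjoint_Ioc_of_le le_rfl) measurableSet_Ioc
            (hi _ (h1 ▸ subset_union_left)) (hi _ (h1 ▸ subset_union_right))]
      _ = 0 + ∫ z in Ioc u t, g u * w (z - u) := by
          congr 1
          · rw [setIntegral_congr_fun measurableSet_Ioc
              (fun z hz => if_neg (not_lt.2 hz.2) : EqOn _ (fun _ => (0:ℝ)) _)]
            simp
          · exact setIntegral_congr_fun measurableSet_Ioc fun z hz => if_pos hz.1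
      _ = g u * ∫ z in u..t, w (z - u) := by
          rw [zero_add, ← intervalIntegral.integral_of_le hu.2, intervalIntegral.integral_const_mul]
  -- identify right side
  have hR : (∫ z, ∫ u, f z u ∂μ ∂μ) = ∫ z in (0:ℝ)..t, ∫ u in (0:ℝ)..z, g u * w (z - u) := by
    rw [intervalIntegral.integral_of_le ht, hμ]
    refine setIntegral_congr_fun measurableSet_Ioc fun z hz => ?_
    have h1 : Ioc (0:ℝ) z ∪ Ioc z t = Ioc 0 t := Ioc_union_Ioc_eq_Ioc hz.1.le hz.2
    have hi : ∀ s : Set ℝ, s ⊆ Ioc 0 t → IntegrableOn (fun u => f z u) s := by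
      intro s hs
      have hsm2 : StronglyMeasurable fun u => f z u := by
        have : (fun u => f z u) = (Iio z).indicator (fun u => g u * w (z - u)) := by
          ext u; by_cases h : u < z <;> simp [hf, h, indicator, mem_Iio]
        rw [this]
        exact (by fun_prop : Continuous fun u : ℝ => g u * w (z - u)).stronglyMeasurable.indicator
          measurableSet_Iio
      refine (IntegrableOn.mono_set ?_ hs)
      refine Integrable.mono' (integrable_const M) hsm2.aestronglyMeasurable ?_
      refine (ae_restrict_iff' measurableSet_Ioc).2 (ae_of_all _ fun u hu => ?_)
      by_cases h : u < z
      · have := hM (z, u) ⟨⟨hz.1.le, hz.2⟩, ⟨hu.1.le, hu.2⟩⟩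
        simp only [hf, if_pos h]
        exact this
      · simp [hf, h, hM0]
    calc ∫ u, f z u ∂μ = (∫ u in Ioc 0 z, f z u) + ∫ u in Ioc z t, f z u := by
          rw [hμ, ← h1, setIntegral_union (Ioc_disjoint_Ioc_of_le le_rfl) measurableSet_Ioc
            (hi _ (h1 ▸ subset_union_left)) (hi _ (h1 ▸ subset_union_right))]
      _ = (∫ u in Ioc 0 z, f z u) + 0 := by
          congr 1
          rw [setIntegral_congr_fun measurableSet_Ioc
            (fun u hu => if_neg (not_lt.2 hu.1.le) : EqOn _ (fun _ => (0:ℝ)) _)]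
          simp
      _ = ∫ u in (0:ℝ)..z, g u * w (z - u) := by
          rw [add_zero, integral_Ioc_eq_integral_Ioo,
            setIntegral_congr_fun measurableSet_Ioo
              (fun u hu => if_pos hu.2 : EqOn (fun u => f z u) (fun u => g u * w (z - u)) _),
            ← integral_Ioc_eq_integral_Ioo, ← intervalIntegral.integral_of_le hz.1.le]
  rw [← hL, ← hswap, hR]

/-- Computation of the sampling probability `p` (Equation (14) of the paper): integrating the
density of the first sampling time `S₁` over `(0,t)` yields `C(t)/(b U(t))`, i.e.
`∫₀^t (c₂ g₂(z) + c₂ ∫₀^z g₂(u) W'(z-u) du - C(z) C(t)/(b U(t))) dz = C(t)/(b U(t))`. -/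
theorem prob_at_least_one_sample
    (b c₂ q t : ℝ) (hb : 0 < b) (hc₂ : c₂ ∈ Ioo (0:ℝ) 1) (hq : q = b * c₂) (ht : 0 < t)
    (g₂ : ℝ → ℝ) (hg₂cont : ContinuousOn g₂ (Ici 0)) (hg₂nn : ∀ u, 0 ≤ u → 0 ≤ g₂ u)
    (W W' : ℝ → ℝ)
    (hWnn : ∀ z, 0 ≤ z → 0 ≤ W z)
    (hW0 : W 0 = 1)
    (hWderiv : ∀ z, 0 ≤ z → HasDerivAt W (W' z) z)
    (hW'cont : ContinuousOn W' (Ici 0))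
    (C U : ℝ → ℝ)
    (hC : ∀ z, C z = q * ∫ u in (0:ℝ)..z, W (z - u) * g₂ u)
    (hU : ∀ z, U z = 1 + ∫ x in (0:ℝ)..z, C x) :
    ∫ z in (0:ℝ)..t,
        (c₂ * g₂ z + c₂ * (∫ u in (0:ℝ)..z, g₂ u * W' (z - u))
          - C z * C t / (b * U t))
      = C t / (b * U t) := by
  obtain ⟨hc₂0, _⟩ := hc₂
  have hq0 : 0 < q := hq ▸ mul_pos hb hc₂0
  have hWcont : ContinuousOn W (Ici 0) :=
    fun z hz => (hWderiv z hz).continuousAt.continuousWithinAt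
  -- continuous extensions to all of ℝ
  set g : ℝ → ℝ := fun u => g₂ (max u 0) with hgdef
  set w : ℝ → ℝ := fun u => W' (max u 0) with hwdef
  set Wb : ℝ → ℝ := fun u => W (max u 0) with hWbdef
  have hmax : Continuous fun u : ℝ => max u 0 := continuous_id.max continuous_const
  have hgc : Continuous g := hg₂cont.comp_continuous hmax fun x => mem_Ici.2 (le_max_right _ _)
  have hwc : Continuous w := hW'cont.comp_continuous hmax fun x => mem_Ici.2 (le_max_right _ _)
  have hWbc : Continuous Wb := hWcont.comp_continuous hmax fun x => mem_Ici.2 (le_max_right _ _)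
  have hgeq : ∀ u, 0 ≤ u → g u = g₂ u := fun u hu => by simp [hgdef, max_eq_left hu]
  have hweq : ∀ u, 0 ≤ u → w u = W' u := fun u hu => by simp [hwdef, max_eq_left hu]
  have hWbeq : ∀ u, 0 ≤ u → Wb u = W u := fun u hu => by simp [hWbdef, max_eq_left hu]
  set Gb : ℝ → ℝ := fun z => ∫ u in (0:ℝ)..z, g u * w (z - u) with hGbdef
  set Cb : ℝ → ℝ := fun z => q * ∫ u in (0:ℝ)..z, Wb (z - u) * g u with hCbdef
  have hGbc : Continuous Gb := by
    apply intervalIntegral.continuous_parametric_intervalIntegral_of_continuous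
      (f := fun z u => g u * w (z - u)) _ continuous_id
    exact (hgc.comp continuous_snd).mul (hwc.comp (continuous_fst.sub continuous_snd))
  have hCbc : Continuous Cb := by
    apply Continuous.mul continuous_const
    apply intervalIntegral.continuous_parametric_intervalIntegral_of_continuous
      (f := fun z u => Wb (z - u) * g u) _ continuous_id
    exact (hWbc.comp (continuous_fst.sub continuous_snd)).mul (hgc.comp continuous_snd)
  -- the original functions agree with the extensions for nonneg arguments
  have hGeq : ∀ z, 0 ≤ z → (∫ u in (0:ℝ)..z, g₂ u * W' (z - u)) = Gb z := by
    intro z hz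
    refine intervalIntegral.integral_congr fun u hu => ?_
    rw [uIcc_of_le hz] at hu
    rw [hgeq u hu.1, hweq (z - u) (by linarith [hu.2])]
  have hCeq : ∀ z, 0 ≤ z → C z = Cb z := by
    intro z hz
    rw [hC z, hCbdef]
    congr 1
    refine intervalIntegral.integral_congr fun u hu => ?_
    rw [uIcc_of_le hz] at hu
    rw [hgeq u hu.1, hWbeq (z - u) (by linarith [hu.2])]
  -- positivity of U t
  have hCnn : ∀ z, 0 ≤ z → 0 ≤ C z := by
    intro z hz
    rw [hC z]
    refine mul_nonneg hq0.le (intervalIntegral.integral_nonneg hz fun u hu => ?_)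
    exact mul_nonneg (hWnn _ (by linarith [hu.1, hu.2])) (hg₂nn u hu.1)
  have hUt : 0 < U t := by
    have : 0 ≤ ∫ x in (0:ℝ)..t, C x :=
      intervalIntegral.integral_nonneg ht.le fun x hx => hCnn x hx.1
    rw [hU t]; linarith
  have hbU : b * U t ≠ 0 := (mul_pos hb hUt).ne'
  -- the key identity
  have hwint : ∀ a b : ℝ, IntervalIntegrable w volume a b := fun a b => hwc.intervalIntegrable a b
  have h1 : ∀ u ∈ Icc (0:ℝ) t, Wb (t - u) * g u = g u + g u * ∫ z in u..t, w (z - u) := by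
    intro u hu
    have htu : 0 ≤ t - u := by linarith [hu.2]
    have hFTC : (∫ s in (0:ℝ)..(t - u), W' s) = W (t - u) - 1 := by
      rw [intervalIntegral.integral_eq_sub_of_hasDerivAt (fun s hs => hWderiv s
        (by rw [uIcc_of_le htu] at hs; exact hs.1)) ((hW'cont.mono (by
          rw [uIcc_of_le htu]; exact Icc_subset_Ici_self)).intervalIntegrable), hW0]
    have hsub : (∫ z in u..t, w (z - u)) = ∫ s in (0:ℝ)..(t - u), w s := by
      rw [intervalIntegral.integral_comp_sub_right, sub_self]
    have hcw : (∫ s in (0:ℝ)..(t - u), w s) = ∫ s in (0:ℝ)..(t - u), W' s := by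
      refine intervalIntegral.integral_congr fun s hs => ?_
      rw [uIcc_of_le htu] at hs
      exact hweq s hs.1
    rw [hsub, hcw, hFTC, hWbeq (t - u) htu]
    ring
  have hintg : IntervalIntegrable g volume 0 t := hgc.intervalIntegrable 0 t
  have hinnercont : Continuous fun u => g u * ∫ z in u..t, w (z - u) := by
    have heq : (fun u => ∫ z in u..t, w (z - u)) = fun u => ∫ s in (0:ℝ)..(t - u), w s := by
      funext u; rw [intervalIntegral.integral_comp_sub_right, sub_self]
    refine hgc.mul ?_
    rw [heq]
    exact (intervalIntegral.continuous_primitive hwint 0).comp (continuous_const.sub continuous_id)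
  have h2 : (∫ u in (0:ℝ)..t, Wb (t - u) * g u)
      = (∫ u in (0:ℝ)..t, g u) + ∫ u in (0:ℝ)..t, g u * ∫ z in u..t, w (z - u) := by
    rw [← intervalIntegral.integral_add hintg (hinnercont.intervalIntegrable 0 t)]
    exact intervalIntegral.integral_congr fun u hu => h1 u (by rwa [uIcc_of_le ht.le] at hu)
  have h3 : (∫ u in (0:ℝ)..t, g u * ∫ z in u..t, w (z - u)) = ∫ z in (0:ℝ)..t, Gb z :=
    triangle_swap t ht.le g w hgc hwc
  have hCt : C t / b = c₂ * ∫ u in (0:ℝ)..t, Wb (t - u) * g u := by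
    rw [hCeq t ht.le, hCbdef, hq]
    field_simp
  have keyint : c₂ * (∫ z in (0:ℝ)..t, g₂ z) + c₂ * (∫ z in (0:ℝ)..t, Gb z) = C t / b := by
    have hgg : (∫ z in (0:ℝ)..t, g₂ z) = ∫ z in (0:ℝ)..t, g z :=
      intervalIntegral.integral_congr fun u hu =>
        (hgeq u (by rw [uIcc_of_le ht.le] at hu; exact hu.1)).symm
    rw [hCt, h2, hgg, h3, mul_add]
  -- integrability of the pieces
  have hig₂ : IntervalIntegrable (fun z => c₂ * g₂ z) volume 0 t :=
    ((hg₂cont.mono (by rw [uIcc_of_le ht.le]; exact Icc_subset_Ici_self)).intervalIntegrable).const_mul c₂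
  have hiGb : IntervalIntegrable (fun z => c₂ * Gb z) volume 0 t :=
    (continuous_const.mul hGbc).intervalIntegrable 0 t
  have hiCb : IntervalIntegrable (fun z => Cb z * C t / (b * U t)) volume 0 t := by
    have : Continuous fun z => Cb z * C t / (b * U t) := by fun_prop
    exact this.intervalIntegrable 0 t
  -- main computation
  have hICb : (∫ z in (0:ℝ)..t, Cb z) = U t - 1 := by
    have : (∫ z in (0:ℝ)..t, Cb z) = ∫ z in (0:ℝ)..t, C z :=
      intervalIntegral.integral_congr fun z hz =>
        (hCeq z (by rw [uIcc_of_le ht.le] at hz; exact hz.1)).symm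
    rw [this, hU t]; ring
  calc ∫ z in (0:ℝ)..t,
        (c₂ * g₂ z + c₂ * (∫ u in (0:ℝ)..z, g₂ u * W' (z - u)) - C z * C t / (b * U t))
      = ∫ z in (0:ℝ)..t, (c₂ * g₂ z + c₂ * Gb z - Cb z * C t / (b * U t)) := by
        refine intervalIntegral.integral_congr fun z hz => ?_
        rw [uIcc_of_le ht.le] at hz
        rw [hGeq z hz.1, hCeq z hz.1]
    _ = (∫ z in (0:ℝ)..t, (c₂ * g₂ z + c₂ * Gb z))
          - ∫ z in (0:ℝ)..t, Cb z * C t / (b * U t) := by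
        rw [← intervalIntegral.integral_sub (hig₂.add hiGb) hiCb]
    _ = (c₂ * (∫ z in (0:ℝ)..t, g₂ z) + c₂ * (∫ z in (0:ℝ)..t, Gb z))
          - (∫ z in (0:ℝ)..t, Cb z) * C t / (b * U t) := by
        rw [intervalIntegral.integral_add hig₂ hiGb, intervalIntegral.integral_const_mul,
          intervalIntegral.integral_const_mul]
        congr 1
        simp_rw [mul_div_assoc]
        rw [intervalIntegral.integral_mul_const]
    _ = C t / b - (U t - 1) * C t / (b * U t) := by rw [keyint, hICb]
    _ = C t / (b * U t) := by field_simp; ring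
end

section
/- For every integer n ≥ 1 and all real numbers z₁, …, z_n and y₂, …, y_n, the likelihood L = g(z₁)·k(z_n)·∏_{i=2}^{n} f(z_{i−1}; y_i, z_i) satisfies L = b^{n−1}·μ^{n}·(1/Q(t))·( ∏_{i=1}^{n} Q(t−z_i) )/( ∏_{i=2}^{n} Q(t−y_i) ); that is, the likelihood of a sampled tree derived in this paper for the Markovian case agrees exactly with the previously derived likelihood formula of Stadler et al. -/
open Real Finset

set_option maxHeartbeats 2000000 in
/-- In the Markovian case, the likelihood of a sampled tree derived in this paper,
`L = g(z₁) k(z_n) ∏_{i=2}^n f(z_{i-1}; y_i, z_i)`, agrees exactly with the previously derived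
likelihood formula of Stadler et al.:
`L = b^{n-1} μ^n (1/Q(t)) (∏_{i=1}^n Q(t-z_i)) / (∏_{i=2}^n Q(t-y_i))`. -/
theorem markovian_likelihood_agrees_with_stadler
    (b d μ t : ℝ) (hb : 0 < b) (hd : 0 < d) (hμ : 0 < μ) (ht : 0 < t)
    (α₁ α₂ γ γ₁ γ₂ : ℝ)
    (hα₁ : α₁ = (d + μ - b + Real.sqrt ((μ + d - b) ^ 2 + 4 * b * μ)) / 2)
    (hα₂ : α₂ = (b - d - μ + Real.sqrt ((μ + d - b) ^ 2 + 4 * b * μ)) / 2)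
    (hγ : γ = α₁ + α₂)
    (hγ₁ : γ₁ = Real.sqrt ((b - d - μ) ^ 2 + 4 * b * μ))
    (hγ₂ : γ₂ = -(b - d - μ) / γ₁)
    (g k Q : ℝ → ℝ) (f : ℝ → ℝ → ℝ → ℝ)
    (hg : ∀ z : ℝ, g z = μ * Real.exp (α₂ * z) * (α₂ + α₁ * Real.exp (γ * (t - z)))
      / (α₂ + α₁ * Real.exp (γ * t)))
    (hk : ∀ z : ℝ, k z = Real.exp (α₁ * z) * (α₂ + α₁ * Real.exp (γ * (t - z)))
      / (α₂ + α₁ * Real.exp (γ * t)))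
    (hf : ∀ x y z : ℝ, f x y z
      = b * μ * Real.exp (α₁ * (x - y)) * Real.exp (α₂ * (z - y))
        * (α₂ + α₁ * Real.exp (γ * (t - x))) * (α₂ + α₁ * Real.exp (γ * (t - z)))
        / (α₂ + α₁ * Real.exp (γ * (t - y))) ^ 2)
    (hQ : ∀ x : ℝ, Q x = 2 * (1 - γ₂ ^ 2) + Real.exp (-γ₁ * x) * (1 - γ₂) ^ 2
      + Real.exp (γ₁ * x) * (1 + γ₂) ^ 2)
    (n : ℕ) (hn : 1 ≤ n) (z y : ℕ → ℝ) :
    g (z 1) * k (z n) * ∏ i ∈ Finset.Icc 2 n, f (z (i - 1)) (y i) (z i)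
      = b ^ (n - 1) * μ ^ n * (1 / Q t) * (∏ i ∈ Finset.Icc 1 n, Q (t - z i))
        / ∏ i ∈ Finset.Icc 2 n, Q (t - y i) := by
  subst hγ
  -- basic facts about the constants
  have hS : Real.sqrt ((μ + d - b) ^ 2 + 4 * b * μ) = γ₁ := by
    rw [hγ₁]; congr 1; ring
  have habs : |d + μ - b| < γ₁ := by
    rw [← hS]
    refine (Real.lt_sqrt (abs_nonneg _)).2 ?_
    have h : |d + μ - b| ^ 2 = (μ + d - b) ^ 2 := by rw [sq_abs]; ring
    rw [h]; nlinarith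
  have hα₁pos : 0 < α₁ := by
    rw [hα₁, hS]
    have := neg_abs_le (d + μ - b)
    linarith
  have hα₂pos : 0 < α₂ := by
    rw [hα₂, hS]
    have := le_abs_self (d + μ - b)
    linarith
  have hsum : (0:ℝ) < α₁ + α₂ := by linarith
  have hγγ₁ : γ₁ = α₁ + α₂ := by rw [hα₁, hα₂, hS]; ring
  have hγ₂' : γ₂ = (α₁ - α₂) / (α₁ + α₂) := by
    have hd' : α₁ - α₂ = -(b - d - μ) := by rw [hα₁, hα₂]; ring
    rw [hγ₂, hγγ₁, ← hd']
  -- exponential rewriting lemmas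
  have eA : ∀ x : ℝ, Real.exp ((α₁ + α₂) * (t - x))
      = (Real.exp (α₁ * t) * Real.exp (α₂ * t)) / (Real.exp (α₁ * x) * Real.exp (α₂ * x)) := by
    intro x
    rw [← Real.exp_add, ← Real.exp_add, ← Real.exp_sub]
    congr 1; ring
  have eT : Real.exp ((α₁ + α₂) * t) = Real.exp (α₁ * t) * Real.exp (α₂ * t) := by
    rw [← Real.exp_add]; congr 1; ring
  have e1 : ∀ x y : ℝ, Real.exp (α₁ * (x - y)) = Real.exp (α₁ * x) / Real.exp (α₁ * y) := by
    intro x y; rw [← Real.exp_sub]; congr 1; ring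
  have e2 : ∀ x y : ℝ, Real.exp (α₂ * (x - y)) = Real.exp (α₂ * x) / Real.exp (α₂ * y) := by
    intro x y; rw [← Real.exp_sub]; congr 1; ring
  have hApos : ∀ r : ℝ, 0 < r → 0 < α₂ + α₁ * r := by
    intro r hr; nlinarith
  -- the key formula for Q
  have hQA : ∀ x : ℝ, Q (t - x) = 4 / (α₁ + α₂) ^ 2
      * ((Real.exp (α₁ * x) * Real.exp (α₂ * x)) / (Real.exp (α₁ * t) * Real.exp (α₂ * t)))
      * (α₂ + α₁ * ((Real.exp (α₁ * t) * Real.exp (α₂ * t))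
          / (Real.exp (α₁ * x) * Real.exp (α₂ * x)))) ^ 2 := by
    intro x
    rw [hQ, hγ₂', hγγ₁,
      show -(α₁ + α₂) * (t - x) = (α₁ * x + α₂ * x) - (α₁ * t + α₂ * t) from by ring,
      show (α₁ + α₂) * (t - x) = (α₁ * t + α₂ * t) - (α₁ * x + α₂ * x) from by ring]
    simp only [Real.exp_sub, Real.exp_add]
    field_simp
    ring
  have hQpos : ∀ x : ℝ, 0 < Q (t - x) := by
    intro x
    rw [hQA x]
    have h1 : (0:ℝ) < 4 / (α₁ + α₂) ^ 2 := by positivity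
    have h2 : (0:ℝ) < (Real.exp (α₁ * x) * Real.exp (α₂ * x))
        / (Real.exp (α₁ * t) * Real.exp (α₂ * t)) := by positivity
    have h3 : (0:ℝ) < α₂ + α₁ * ((Real.exp (α₁ * t) * Real.exp (α₂ * t))
        / (Real.exp (α₁ * x) * Real.exp (α₂ * x))) := hApos _ (by positivity)
    exact mul_pos (mul_pos h1 h2) (pow_pos h3 2)
  have hA0 : (0:ℝ) < α₂ + α₁ * (Real.exp (α₁ * t) * Real.exp (α₂ * t)) :=
    hApos _ (by positivity)
  -- key step identity
  have hkey : ∀ u v w : ℝ, k w * f u v w * Q (t - v) = k u * (b * μ) * Q (t - w) := by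
    intro u v w
    have h1 : (0:ℝ) < α₂ + α₁ * ((Real.exp (α₁ * t) * Real.exp (α₂ * t))
        / (Real.exp (α₁ * v) * Real.exp (α₂ * v))) := hApos _ (by positivity)
    rw [hk, hk, hf, hQA, hQA]
    simp only [eA, eT, e1, e2]
    field_simp
  have hQt : Q t = 4 / (α₁ + α₂) ^ 2
      * (1 / (Real.exp (α₁ * t) * Real.exp (α₂ * t)))
      * (α₂ + α₁ * (Real.exp (α₁ * t) * Real.exp (α₂ * t))) ^ 2 := by
    have h := hQA 0
    rw [sub_zero] at h
    simp only [mul_zero, Real.exp_zero, mul_one, one_mul, div_one] at h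
    exact h
  have hQtpos : 0 < Q t := by
    rw [hQt]
    have h1 : (0:ℝ) < 4 / (α₁ + α₂) ^ 2 := by positivity
    have h2 : (0:ℝ) < 1 / (Real.exp (α₁ * t) * Real.exp (α₂ * t)) := by positivity
    exact mul_pos (mul_pos h1 h2) (pow_pos hA0 2)
  induction n, hn using Nat.le_induction with
  | base =>
    rw [show Finset.Icc 2 1 = (∅ : Finset ℕ) from Finset.Icc_eq_empty (by omega),
      Finset.prod_empty, Finset.Icc_self, Finset.prod_singleton, Finset.prod_empty]
    rw [hg, hk, hQA, hQt]
    simp only [eA, eT, pow_zero, pow_one, one_mul, mul_one, div_one]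
    have hAz : (0:ℝ) < α₂ + α₁ * ((Real.exp (α₁ * t) * Real.exp (α₂ * t))
        / (Real.exp (α₁ * (z 1)) * Real.exp (α₂ * (z 1)))) := hApos _ (by positivity)
    field_simp
    ring
  | succ n hn ih =>
    rw [Finset.prod_Icc_succ_top (by omega : 2 ≤ n + 1),
      Finset.prod_Icc_succ_top (by omega : 1 ≤ n + 1),
      Finset.prod_Icc_succ_top (by omega : 2 ≤ n + 1)]
    simp only [Nat.add_sub_cancel]
    have hPy : (0:ℝ) < ∏ i ∈ Finset.Icc 2 n, Q (t - y i) :=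
      Finset.prod_pos fun i _ => hQpos _
    rw [eq_div_iff (ne_of_gt (mul_pos hPy (hQpos (y (n + 1)))))]
    rw [eq_div_iff hPy.ne'] at ih
    have key := hkey (z n) (y (n + 1)) (z (n + 1))
    have hbpow : (b:ℝ) ^ n = b ^ (n - 1) * b := by
      rw [← pow_succ]; congr 1; omega
    rw [hbpow, pow_succ μ n]
    linear_combination (g (z 1) * (∏ i ∈ Finset.Icc 2 n, f (z (i - 1)) (y i) (z i))
        * (∏ i ∈ Finset.Icc 2 n, Q (t - y i))) * key
      + (b * μ * Q (t - z (n + 1))) * ih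
end
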